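/- Let X be a finite n-dimensional simplicial complex satisfying condition (1_X), let 1 ≤ i ≤ n−1, and let v be a vertex of X. For all f, g ∈ C^i(X), one has (τ_v f, τ_v g)_v = (ρ_v f, ρ_v g), where the left side is the inner product on C^{i−1}(Lk(v)) and the right side is the inner product on C^i(X). -/

import Mathlib

open Finset

open scoped Classical

variable {V : Type*}

/-- A (finite) simplicial complex on the vertex type `V`: a collection of nonempty
finite sets of vertices (the simplices) closed under passing to nonempty subsets. -/
def IsComplex [DecidableEq V] (K : Finset (Finset V)) : Prop :=
  (∀ s ∈ K, s.Nonempty) ∧ ∀ s ∈ K, ∀ t : Finset V, t ⊆ s → t.Nonempty → t ∈ K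

/-- `K` is `n`-dimensional and satisfies condition `(1_X)`: every simplex has dimension
at most `n` and is a face of some `n`-dimensional simplex (one of cardinality `n+1`). -/
def IsPureDim [DecidableEq V] (K : Finset (Finset V)) (n : ℕ) : Prop :=
  (∀ s ∈ K, s.card ≤ n + 1) ∧ ∀ s ∈ K, ∃ t ∈ K, s ⊆ t ∧ t.card = n + 1

/-- `wt K n s` : the number `w(s)` of `n`-dimensional simplices of `K` containing `s`. -/
noncomputable def wt [DecidableEq V] (K : Finset (Finset V)) (n : ℕ) (s : Finset V) : ℕ :=
  (K.filter fun t => s ⊆ t ∧ t.card = n + 1).card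

/-- An `m`-tuple of vertices is allowed when its entries are distinct and form a simplex
of `K`; i.e. it is an oriented `(m-1)`-simplex of `K`. -/
def Allowed [DecidableEq V] [Fintype V] (K : Finset (Finset V)) {m : ℕ}
    (v : Fin m → V) : Prop :=
  Function.Injective v ∧ Finset.image v Finset.univ ∈ K

/-- `f` is an `(m-1)`-cochain on `K`: a real-valued alternating function on oriented
`(m-1)`-simplices of `K` (realized as a function on all `m`-tuples of vertices which is
alternating and vanishes on tuples which are not oriented simplices of `K`). -/
def IsCochain [DecidableEq V] [Fintype V] (K : Finset (Finset V)) (m : ℕ)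
    (f : (Fin m → V) → ℝ) : Prop :=
  (∀ (σ : Equiv.Perm (Fin m)) (v : Fin m → V),
      f (v ∘ σ) = ((Equiv.Perm.sign σ : ℤ) : ℝ) * f v) ∧
  ∀ v : Fin m → V, ¬ Allowed K v → f v = 0

/-- The inner product `(f,g) = ∑_s w(s)·f(s)·g(s)` on `(m-1)`-cochains, the sum being over
the unoriented `(m-1)`-simplices `s` of `K` (each with an arbitrarily chosen orientation);
summing over all `m`-tuples counts each simplex `m!` times, whence the normalization. -/
noncomputable def innerC [DecidableEq V] [Fintype V] (K : Finset (Finset V)) (n m : ℕ)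
    (f g : (Fin m → V) → ℝ) : ℝ :=
  (∑ v : Fin m → V, (wt K n (Finset.image v Finset.univ) : ℝ) * f v * g v) /
    (Nat.factorial m : ℝ)

/-- The coboundary `d : C^{m-1}(K) → C^m(K)`. -/
noncomputable def cobound [DecidableEq V] [Fintype V] (K : Finset (Finset V)) {m : ℕ}
    (f : (Fin m → V) → ℝ) : (Fin (m + 1) → V) → ℝ :=
  fun v => if Allowed K v then
    ∑ j : Fin (m + 1), (-1 : ℝ) ^ (j : ℕ) * f (v ∘ Fin.succAbove j)
  else 0

/-- The operator `δ : C^m(K) → C^{m-1}(K)`,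
`(δf)(s) = ∑_x (w([x,s])/w(s))·f([x,s])`, the sum being over the vertices `x`
such that `[x,s]` is an oriented simplex of `K`. -/
noncomputable def codiff [DecidableEq V] [Fintype V] (K : Finset (Finset V)) (n : ℕ) {m : ℕ}
    (f : (Fin (m + 1) → V) → ℝ) : (Fin m → V) → ℝ :=
  fun s => ∑ x : V,
    if Allowed K (Fin.cons x s) then
      ((wt K n (Finset.image (Fin.cons x s) Finset.univ) : ℝ) /
          (wt K n (Finset.image s Finset.univ) : ℝ)) * f (Fin.cons x s)
    else 0

/-- The Laplace operator `Δ = δ ∘ d` on `(m-1)`-cochains. -/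
noncomputable def lap [DecidableEq V] [Fintype V] (K : Finset (Finset V)) (n : ℕ) {m : ℕ}
    (f : (Fin m → V) → ℝ) : (Fin m → V) → ℝ :=
  codiff K n (cobound K f)

/-- `ρ_v : C^{m-1}(K) → C^{m-1}(K)`: `(ρ_v f)(s) = f(s)` if `v` is a vertex of `s`,
and `0` otherwise. -/
noncomputable def rho [DecidableEq V] {m : ℕ} (v : V) (f : (Fin m → V) → ℝ) :
    (Fin m → V) → ℝ :=
  fun s => if ∃ j, s j = v then f s else 0

/-- The vertices of `K`. -/
noncomputable def verts [DecidableEq V] [Fintype V] (K : Finset (Finset V)) : Finset V :=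
  Finset.univ.filter fun v => {v} ∈ K

/-- The link `Lk(v)` of a vertex `v`: all simplices `s` of `K` with `v ∉ s` and
`s ∪ {v} ∈ K`. -/
noncomputable def linkK [DecidableEq V] (K : Finset (Finset V)) (v : V) :
    Finset (Finset V) :=
  K.filter fun s => v ∉ s ∧ insert v s ∈ K

/-- `τ_v : C^{m}(K) → C^{m-1}(Lk(v))`: `(τ_v f)(s) = f([v,s])` for `s` an oriented
simplex of the link `Lk(v)`. -/
noncomputable def tau [DecidableEq V] [Fintype V] (K : Finset (Finset V)) (v : V) {m : ℕ}
    (f : (Fin (m + 1) → V) → ℝ) : (Fin m → V) → ℝ :=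
  fun s => if Allowed (linkK K v) s then f (Fin.cons v s) else 0

/-- `c` is an eigenvalue of the Laplace operator acting on `(m-1)`-cochains of `K`. -/
def IsEigen [DecidableEq V] [Fintype V] (K : Finset (Finset V)) (n m : ℕ) (c : ℝ) : Prop :=
  ∃ f : (Fin m → V) → ℝ, f ≠ 0 ∧ IsCochain K m f ∧ lap K n f = c • f


section AuxTau

variable [DecidableEq V] [Fintype V]

lemma image_cons_univ {m : ℕ} (x : V) (s : Fin m → V) :
    Finset.image (Fin.cons x s) Finset.univ = insert x (Finset.image s Finset.univ) := by
  ext y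
  simp only [Finset.mem_image, Finset.mem_univ, true_and, Finset.mem_insert]
  constructor
  · rintro ⟨j, rfl⟩
    induction j using Fin.cases with
    | zero => exact Or.inl (by simp)
    | succ k => exact Or.inr ⟨k, by simp⟩
  · rintro (rfl | ⟨k, rfl⟩)
    · exact ⟨0, by simp⟩
    · exact ⟨k.succ, by simp⟩

lemma allowed_cons_iff (K : Finset (Finset V)) (hcplx : IsComplex K)
    {m : ℕ} (hm : 0 < m) (v : V) (s : Fin m → V) :
    Allowed (linkK K v) s ↔ Allowed K (Fin.cons v s) := by
  have : Nonempty (Fin m) := ⟨⟨0, hm⟩⟩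
  have hne : (Finset.image s Finset.univ).Nonempty :=
    Finset.Nonempty.image Finset.univ_nonempty _
  constructor
  · rintro ⟨hinj, hmem⟩
    simp only [linkK, Finset.mem_filter] at hmem
    obtain ⟨hK, hvs, hins⟩ := hmem
    refine ⟨Fin.cons_injective_iff.2 ⟨?_, hinj⟩, ?_⟩
    · rintro ⟨j, rfl⟩
      exact hvs (Finset.mem_image.2 ⟨j, Finset.mem_univ _, rfl⟩)
    · rw [image_cons_univ]; exact hins
  · rintro ⟨hinj, hmem⟩
    rw [image_cons_univ] at hmem
    obtain ⟨hvr, hsinj⟩ := Fin.cons_injective_iff.1 hinj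
    have hvns : v ∉ Finset.image s Finset.univ := by
      simp only [Finset.mem_image]
      rintro ⟨j, -, hj⟩
      exact hvr ⟨j, hj⟩
    have hK : Finset.image s Finset.univ ∈ K :=
      hcplx.2 _ hmem _ (Finset.subset_insert _ _) hne
    exact ⟨hsinj, by simp only [linkK, Finset.mem_filter]; exact ⟨hK, hvns, hmem⟩⟩

lemma wt_link_eq (K : Finset (Finset V)) (hcplx : IsComplex K) {n : ℕ} (hn : 1 ≤ n)
    (v : V) (t : Finset V) (ht : t ∈ linkK K v) :
    wt (linkK K v) (n - 1) t = wt K n (insert v t) := by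
  simp only [linkK, Finset.mem_filter] at ht
  obtain ⟨htK, hvt, hins⟩ := ht
  unfold wt
  rw [Nat.sub_add_cancel hn]
  refine Finset.card_nbij' (fun u => insert v u) (fun w => w.erase v) ?_ ?_ ?_ ?_
  · intro u hu
    simp only [linkK, Finset.mem_coe, Finset.mem_filter] at hu
    obtain ⟨⟨huK, hvu, hiu⟩, htu, hcard⟩ := hu
    simp only [Finset.mem_coe, Finset.mem_filter]
    exact ⟨hiu, Finset.insert_subset_insert _ htu,
      by rw [Finset.card_insert_of_notMem hvu, hcard]⟩
  · intro w hw
    simp only [Finset.mem_coe, Finset.mem_filter] at hw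
    obtain ⟨hwK, hsw, hcard⟩ := hw
    have hvw : v ∈ w := hsw (Finset.mem_insert_self _ _)
    have hce : (w.erase v).card = n := by
      rw [Finset.card_erase_of_mem hvw, hcard]; omega
    have hne : (w.erase v).Nonempty := by
      rw [← Finset.card_pos, hce]; omega
    have heK : w.erase v ∈ K := hcplx.2 _ hwK _ (Finset.erase_subset _ _) hne
    simp only [linkK, Finset.mem_coe, Finset.mem_filter]
    refine ⟨⟨heK, Finset.notMem_erase _ _, by rwa [Finset.insert_erase hvw]⟩, ?_, hce⟩
    exact Finset.subset_erase.2 ⟨(Finset.subset_insert _ _).trans hsw, hvt⟩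
  · intro u hu
    simp only [linkK, Finset.mem_coe, Finset.mem_filter] at hu
    exact Finset.erase_insert hu.1.2.1
  · intro w hw
    simp only [Finset.mem_coe, Finset.mem_filter] at hw
    exact Finset.insert_erase (hw.2.1 (Finset.mem_insert_self _ _))

end AuxTau

/-- for `1 ≤ i ≤ n-1`, a vertex `v` of `X`, and `f, g ∈ C^i(X)`,
`(τ_v f, τ_v g)_v = (ρ_v f, ρ_v g)`, the left inner product being taken in
`C^{i-1}(Lk(v))` (an `(n-1)`-dimensional complex) and the right one in `C^i(X)`. -/
theorem tau_inner_product
    [Fintype V] [DecidableEq V] (K : Finset (Finset V)) (n i : ℕ)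
    (hcplx : IsComplex K) (hpure : IsPureDim K n) (hi1 : 1 ≤ i) (hin : i + 1 ≤ n)
    (v : V) (hv : {v} ∈ K)
    (f g : (Fin (i + 1) → V) → ℝ)
    (hf : IsCochain K (i + 1) f) (hg : IsCochain K (i + 1) g) :
    innerC (linkK K v) (n - 1) i (tau K v f) (tau K v g)
      = innerC K n (i + 1) (rho v f) (rho v g) := by
    classical
  have hn1 : 1 ≤ n := by omega
  set H : (Fin (i + 1) → V) → ℝ :=
    fun t => (wt K n (Finset.image t Finset.univ) : ℝ) * f t * g t with hH
  have Hperm : ∀ (σ : Equiv.Perm (Fin (i + 1))) (t : Fin (i + 1) → V), H (t ∘ σ) = H t := by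
    intro σ t
    have him : Finset.image (t ∘ ⇑σ) Finset.univ = Finset.image t Finset.univ := by
      rw [← Finset.image_image, Finset.image_univ_equiv]
    have h1 := hf.1 σ t
    have h2 := hg.1 σ t
    have hs : (((Equiv.Perm.sign σ : ℤ) : ℝ)) ^ 2 = 1 := by
      rcases Int.units_eq_one_or (Equiv.Perm.sign σ) with h | h <;> simp [h]
    simp only [hH, him, h1, h2]
    linear_combination ((wt K n (Finset.image t Finset.univ) : ℝ) * f t * g t) * hs
  have key : ∀ t : Fin (i + 1) → V,
      (wt K n (Finset.image t Finset.univ) : ℝ) * rho v f t * rho v g t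
        = ∑ j : Fin (i + 1), if t j = v then H t else 0 := by
    intro t
    by_cases hft : Allowed K t
    · by_cases hex : ∃ j, t j = v
      · obtain ⟨j0, hj0⟩ := hex
        have huniq : ∀ j : Fin (i + 1), t j = v ↔ j = j0 := fun j =>
          ⟨fun h => hft.1 (h.trans hj0.symm), fun h => h ▸ hj0⟩
        have hex' : ∃ j, t j = v := ⟨j0, hj0⟩
        simp only [rho, if_pos hex']
        calc (wt K n (Finset.image t Finset.univ) : ℝ) * f t * g t
            = H t := rfl
          _ = ∑ j : Fin (i + 1), if t j = v then H t else 0 := by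
              simp only [huniq]
              rw [Finset.sum_ite_eq' Finset.univ j0]
              simp
      · simp only [rho, if_neg hex]
        rw [Finset.sum_eq_zero fun j _ => if_neg fun h => hex ⟨j, h⟩]
        ring
    · have hf0 : f t = 0 := hf.2 t hft
      simp [rho, hH, hf0]
  have stepA : ∑ t : Fin (i + 1) → V,
      (wt K n (Finset.image t Finset.univ) : ℝ) * rho v f t * rho v g t
        = ((i : ℝ) + 1) * ∑ s : Fin i → V, H (Fin.cons v s) := by
    rw [Finset.sum_congr rfl fun t _ => key t, Finset.sum_comm]
    have hj : ∀ j : Fin (i + 1),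
        (∑ t : Fin (i + 1) → V, if t j = v then H t else 0)
          = ∑ s : Fin i → V, H (Fin.cons v s) := by
      intro j
      have hswap : Function.Involutive
          (fun t : Fin (i + 1) → V => t ∘ (Equiv.swap (0 : Fin (i + 1)) j)) := by
        intro t; funext k; simp [Function.comp, Equiv.swap_apply_self]
      have h0 : (∑ t : Fin (i + 1) → V, if t j = v then H t else 0)
          = ∑ t : Fin (i + 1) → V, if t 0 = v then H t else 0 := by
        refine Fintype.sum_bijective _ hswap.bijective _ _ fun t => ?_
        have h1 : (t ∘ (Equiv.swap (0 : Fin (i + 1)) j)) 0 = t j := by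
          simp [Function.comp, Equiv.swap_apply_left]
        rw [h1, Hperm (Equiv.swap (0 : Fin (i + 1)) j) t]
      rw [h0]
      have h2 : (∑ t : Fin (i + 1) → V, if t 0 = v then H t else 0)
          = ∑ p : V × (Fin i → V), if p.1 = v then H (Fin.cons p.1 p.2) else 0 := by
        refine (Fintype.sum_equiv (Fin.consEquiv fun _ => V) _ _ fun p => ?_).symm
        rfl
      rw [h2, Fintype.sum_prod_type]
      have h3 : ∀ x : V, (∑ s : Fin i → V, if x = v then H (Fin.cons x s) else 0)
          = if x = v then (∑ s : Fin i → V, H (Fin.cons x s)) else 0 := by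
        intro x; split <;> simp
      rw [Finset.sum_congr rfl fun x _ => h3 x, Finset.sum_ite_eq' Finset.univ v]
      simp
    rw [Finset.sum_congr rfl fun j _ => hj j, Finset.sum_const]
    simp [mul_comm]
  have stepB : ∑ s : Fin i → V,
      (wt (linkK K v) (n - 1) (Finset.image s Finset.univ) : ℝ) * tau K v f s * tau K v g s
        = ∑ s : Fin i → V, H (Fin.cons v s) := by
    refine Finset.sum_congr rfl fun s _ => ?_
    by_cases hs : Allowed (linkK K v) s
    · simp only [tau, if_pos hs]
      have hw : wt (linkK K v) (n - 1) (Finset.image s Finset.univ)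
          = wt K n (insert v (Finset.image s Finset.univ)) :=
        wt_link_eq K hcplx hn1 v _ hs.2
      simp only [hH, image_cons_univ, hw]
    · simp only [tau, if_neg hs]
      have hna : ¬ Allowed K (Fin.cons v s) := fun h =>
        hs ((allowed_cons_iff K hcplx (by omega) v s).2 h)
      simp [hH, hf.2 _ hna]
  unfold innerC
  rw [stepB, stepA, Nat.factorial_succ]
  have h1 : (Nat.factorial i : ℝ) ≠ 0 := Nat.cast_ne_zero.2 (Nat.factorial_ne_zero i)
  have h2 : ((i : ℝ) + 1) ≠ 0 := by positivity
  push_cast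
  field_simp
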